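/- Let y : [0,T] → [0,∞) be absolutely continuous with y'(t) ≤ -y(t)² + k(t) y(t) for an integrable nonnegative function k, and suppose y(0) > 0. Then for all t ∈ [0,T], y(t) ≤ y(0) exp(∫₀ᵗ k(s) ds) / (1 + y(0) ∫₀ᵗ exp(∫₀ˢ k(r) dr) ds). -/

import Mathlib

open MeasureTheory Set Filter Topology intervalIntegral
open scoped ENNReal NNReal

lemma riccati_fence (T t ε : ℝ) (hT : 0 ≤ T) (ht : t ∈ Set.Icc (0:ℝ) T) (hε : 0 < ε)
    (y y' k G : ℝ → ℝ) (hy0 : 0 < y 0)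
    (hnonneg : ∀ s ∈ Set.Icc (0 : ℝ) T, 0 ≤ y s)
    (hderiv : ∀ s ∈ Set.Icc (0 : ℝ) T, HasDerivAt y (y' s) s)
    (hineq : ∀ s ∈ Set.Icc (0 : ℝ) T, y' s ≤ -(y s) ^ 2 + k s * y s)
    (hGint : MeasureTheory.IntegrableOn G (Set.Icc 0 T))
    (hGnn : ∀ x, 0 ≤ G x)
    (hlow : ∀ x ∈ Set.Ico (0:ℝ) t, ∀ᶠ z in 𝓝[>] x, k x * (z - x) ≤ ∫ r in x..z, G r) :
    y t * Real.exp (-(∫ r in (0:ℝ)..t, G r)) *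
      (1 + y 0 * ∫ s in (0:ℝ)..t, Real.exp (∫ r in (0:ℝ)..s, G r)) ≤ y 0 + ε := by
  obtain ⟨ht0, htT⟩ := ht
  have h0T : (0:ℝ) ∈ Icc (0:ℝ) T := ⟨le_rfl, hT⟩
  set KG : ℝ → ℝ := fun s => ∫ r in (0:ℝ)..s, G r with hKG
  have hGii : ∀ u ∈ Icc (0:ℝ) T, ∀ v ∈ Icc (0:ℝ) T, IntervalIntegrable G volume u v := by
    intro u hu v hv
    exact (hGint.mono_set (uIcc_subset_Icc hu hv)).intervalIntegrable
  have hKGadd : ∀ u ∈ Icc (0:ℝ) T, ∀ v ∈ Icc (0:ℝ) T, KG v - KG u = ∫ r in u..v, G r := by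
    intro u hu v hv
    have h := intervalIntegral.integral_add_adjacent_intervals (hGii 0 h0T u hu) (hGii u hu v hv)
    simp only [hKG]
    linarith
  have hKGmono : ∀ u ∈ Icc (0:ℝ) T, ∀ v ∈ Icc (0:ℝ) T, u ≤ v → KG u ≤ KG v := by
    intro u hu v hv huv
    have h1 := hKGadd u hu v hv
    have h2 : 0 ≤ ∫ r in u..v, G r := intervalIntegral.integral_nonneg huv fun x _ => hGnn x
    linarith
  have hKGcont : ContinuousOn KG (Icc 0 T) := by
    have h := intervalIntegral.continuousOn_primitive_interval
      (show IntegrableOn G (uIcc 0 T) volume by rwa [uIcc_of_le hT])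
    rwa [uIcc_of_le hT] at h
  have hexpKG_cont : ContinuousOn (fun s => Real.exp (KG s)) (Icc 0 T) :=
    Real.continuous_exp.comp_continuousOn hKGcont
  have hexpKG_int : IntegrableOn (fun s => Real.exp (KG s)) (Icc 0 T) :=
    hexpKG_cont.integrableOn_Icc
  have hEii : ∀ u ∈ Icc (0:ℝ) T, ∀ v ∈ Icc (0:ℝ) T,
      IntervalIntegrable (fun s => Real.exp (KG s)) volume u v := by
    intro u hu v hv
    exact (hexpKG_int.mono_set (uIcc_subset_Icc hu hv)).intervalIntegrable
  set D : ℝ → ℝ := fun x => 1 + y 0 * ∫ s in (0:ℝ)..x, Real.exp (KG s) with hD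
  have hDadd : ∀ u ∈ Icc (0:ℝ) T, ∀ v ∈ Icc (0:ℝ) T,
      D v - D u = y 0 * ∫ s in u..v, Real.exp (KG s) := by
    intro u hu v hv
    have h := intervalIntegral.integral_add_adjacent_intervals (hEii 0 h0T u hu) (hEii u hu v hv)
    simp only [hD]
    rw [← h]; ring
  have hDone : ∀ x ∈ Icc (0:ℝ) T, 1 ≤ D x := by
    intro x hx
    have h2 : 0 ≤ ∫ s in (0:ℝ)..x, Real.exp (KG s) :=
      intervalIntegral.integral_nonneg hx.1 fun s _ => (Real.exp_pos _).le
    have := mul_nonneg hy0.le h2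
    simp only [hD]; linarith
  have hDcont : ContinuousOn D (Icc 0 T) := by
    have h := intervalIntegral.continuousOn_primitive_interval
      (show IntegrableOn (fun s => Real.exp (KG s)) (uIcc 0 T) volume by rwa [uIcc_of_le hT])
    rw [uIcc_of_le hT] at h
    exact continuousOn_const.add (continuousOn_const.mul h)
  have hycont : ContinuousOn y (Icc 0 T) := fun s hs =>
    (hderiv s hs).continuousAt.continuousWithinAt
  set f : ℝ → ℝ := fun x => y x * Real.exp (-KG x) * D x - y 0 with hf
  set f' : ℝ → ℝ := fun x => D x * Real.exp (-KG x) * (y' x - y x * k x) + y x * y 0 with hf'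
  have hsubt : Icc (0:ℝ) t ⊆ Icc 0 T := Icc_subset_Icc le_rfl htT
  have key : ∀ ⦃x⦄, x ∈ Icc (0:ℝ) t → f x ≤ ε := by
    apply image_le_of_liminf_slope_right_lt_deriv_boundary' (f := f) (f' := f')
      (B := fun _ => ε) (B' := fun _ => 0)
    · -- continuity of f
      exact (((hycont.mono hsubt).mul
        (Real.continuous_exp.comp_continuousOn (hKGcont.mono hsubt).neg)).mul
        (hDcont.mono hsubt)).sub continuousOn_const
    · -- slope bound
      intro x hx r hr
      have hxT : x ∈ Icc (0:ℝ) T := ⟨hx.1, hx.2.le.trans htT⟩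
      have hxt : x < t := hx.2
      have hmem : Ioc x t ∈ 𝓝[>] x := Ioc_mem_nhdsGT_of_mem ⟨le_rfl, hxt⟩
      have hsub1 : Ioc x t ⊆ Icc 0 T := fun z hz => ⟨hx.1.trans hz.1.le, hz.2.trans htT⟩
      have hle1 : 𝓝[>] x ≤ 𝓝[Icc (0:ℝ) T] x :=
        le_trans (nhdsWithin_le_of_mem hmem) (nhdsWithin_mono x hsub1)
      have hle2 : 𝓝[>] x ≤ 𝓝[≠] x := nhdsWithin_mono x fun z hz => ne_of_gt hz
      have hKGx : Tendsto KG (𝓝[>] x) (𝓝 (KG x)) := (hKGcont x hxT).mono_left hle1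
      have hDx : Tendsto D (𝓝[>] x) (𝓝 (D x)) := (hDcont x hxT).mono_left hle1
      have hslope : Tendsto (slope y x) (𝓝[>] x) (𝓝 (y' x)) :=
        (hasDerivAt_iff_tendsto_slope.1 (hderiv x hxT)).mono_left hle2
      set φ : ℝ → ℝ := fun z => D z * Real.exp (-KG z) * (slope y x z - y x * k x) +
        (y x * Real.exp (-KG x)) * (y 0 * Real.exp (KG z)) with hφ
      have hφt : Tendsto φ (𝓝[>] x) (𝓝 (f' x)) := by
        have hlim : Tendsto φ (𝓝[>] x)
            (𝓝 (D x * Real.exp (-KG x) * (y' x - y x * k x) +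
              (y x * Real.exp (-KG x)) * (y 0 * Real.exp (KG x)))) := by
          apply Tendsto.add
          · exact (hDx.mul ((Real.continuous_exp.tendsto _).comp hKGx.neg)).mul
              (hslope.sub tendsto_const_nhds)
          · exact tendsto_const_nhds.mul (tendsto_const_nhds.mul
              ((Real.continuous_exp.tendsto _).comp hKGx))
        have hid : D x * Real.exp (-KG x) * (y' x - y x * k x) +
            (y x * Real.exp (-KG x)) * (y 0 * Real.exp (KG x)) = f' x := by
          have h1 : Real.exp (-KG x) * Real.exp (KG x) = 1 := by
            rw [← Real.exp_add]; simp
          simp only [hf']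
          linear_combination (y x * y 0) * h1
        rwa [hid] at hlim
      have hφlt : ∀ᶠ z in 𝓝[>] x, φ z < r := hφt.eventually_lt_const hr
      have hslopebd : ∀ᶠ z in 𝓝[>] x, slope f x z ≤ φ z := by
        filter_upwards [hmem, hlow x hx] with z hz hlz
        have hzT : z ∈ Icc (0:ℝ) T := hsub1 hz
        have hxz : (0:ℝ) < z - x := sub_pos.2 hz.1
        have hu : k x * (z - x) ≤ KG z - KG x := by
          rw [hKGadd x hxT z hzT]; exact hlz
        have hab : KG x ≤ KG z := hKGmono x hxT z hzT hz.1.le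
        have hPexp : Real.exp (-KG z) - Real.exp (-KG x) ≤
            -(KG z - KG x) * Real.exp (-KG z) := by
          have h := Real.add_one_le_exp (KG z - KG x)
          have he : Real.exp (KG z - KG x) * Real.exp (-KG z) = Real.exp (-KG x) := by
            rw [← Real.exp_add]; ring_nf
          nlinarith [Real.exp_pos (-KG z)]
        have hDzx : D z - D x ≤ y 0 * (Real.exp (KG z) * (z - x)) := by
          have h1 : D z - D x = y 0 * ∫ s in x..z, Real.exp (KG s) := hDadd x hxT z hzT
          have h2 : (∫ s in x..z, Real.exp (KG s)) ≤ ∫ _s in x..z, Real.exp (KG z) :=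
            intervalIntegral.integral_mono_on hz.1.le (hEii x hxT z hzT)
              intervalIntegrable_const
              (fun w hw => Real.exp_le_exp.2
                (hKGmono w ⟨hx.1.trans hw.1, hw.2.trans hzT.2⟩ z hzT hw.2))
          have h3 : (∫ _s in x..z, Real.exp (KG z)) = (z - x) * Real.exp (KG z) := by
            simp [intervalIntegral.integral_const, smul_eq_mul]
          rw [h1]
          calc y 0 * ∫ s in x..z, Real.exp (KG s) ≤ y 0 * ((z - x) * Real.exp (KG z)) := by
                apply mul_le_mul_of_nonneg_left (h2.trans_eq h3) hy0.le
            _ = y 0 * (Real.exp (KG z) * (z - x)) := by ring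
        have hyx : 0 ≤ y x := hnonneg x hxT
        have hS : slope y x z * (z - x) = y z - y x := by
          rw [slope_def_field]; field_simp
        have hfz : f z - f x = D z * (y z * Real.exp (-KG z) - y x * Real.exp (-KG x)) +
            (y x * Real.exp (-KG x)) * (D z - D x) := by
          simp only [hf]; ring
        have hPz : y z * Real.exp (-KG z) - y x * Real.exp (-KG x) ≤
            Real.exp (-KG z) * (y z - y x) - y x * (k x * (z - x)) * Real.exp (-KG z) := by
          have h5 : y x * (Real.exp (-KG z) - Real.exp (-KG x)) ≤
              y x * (-(KG z - KG x) * Real.exp (-KG z)) := mul_le_mul_of_nonneg_left hPexp hyx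
          have h6 : y x * (-(KG z - KG x) * Real.exp (-KG z)) ≤
              y x * (-(k x * (z - x)) * Real.exp (-KG z)) := by
            apply mul_le_mul_of_nonneg_left _ hyx
            have := (Real.exp_pos (-KG z)).le
            nlinarith
          nlinarith [h5, h6]
        have hDzpos : (0:ℝ) ≤ D z := le_trans zero_le_one (hDone z hzT)
        have hPxpos : (0:ℝ) ≤ y x * Real.exp (-KG x) := mul_nonneg hyx (Real.exp_pos _).le
        have h7 : f z - f x ≤ D z * (Real.exp (-KG z) * (y z - y x) -
              y x * (k x * (z - x)) * Real.exp (-KG z)) +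
            (y x * Real.exp (-KG x)) * (y 0 * (Real.exp (KG z) * (z - x))) := by
          rw [hfz]
          exact add_le_add (mul_le_mul_of_nonneg_left hPz hDzpos)
            (mul_le_mul_of_nonneg_left hDzx hPxpos)
        have h8 : D z * (Real.exp (-KG z) * (y z - y x) -
              y x * (k x * (z - x)) * Real.exp (-KG z)) +
            (y x * Real.exp (-KG x)) * (y 0 * (Real.exp (KG z) * (z - x))) = φ z * (z - x) := by
          simp only [hφ, slope_def_field]
          field_simp
        rw [slope_def_field, div_le_iff₀ hxz]
        calc f z - f x ≤ _ := h7
          _ = φ z * (z - x) := h8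
      exact ((hslopebd.and hφlt).mono fun z hz => lt_of_le_of_lt hz.1 hz.2).frequently
    · -- f 0 ≤ ε
      simp only [hf, hKG, hD, intervalIntegral.integral_same]
      simp
      linarith
    · exact continuousOn_const
    · intro x _; exact (hasDerivWithinAt_const x _ ε)
    · -- boundary bound
      intro x hx hfx
      have hxT : x ∈ Icc (0:ℝ) T := ⟨hx.1, hx.2.le.trans htT⟩
      have hDx := hDone x hxT
      have hex := Real.exp_pos (-KG x)
      simp only [hf] at hfx
      have hprod : 0 < y x * Real.exp (-KG x) * D x := by linarith
      have hyx : 0 < y x := by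
        by_contra hcon
        push_neg at hcon
        nlinarith [mul_nonneg (mul_nonneg (neg_nonneg.2 hcon) hex.le)
          (show (0:ℝ) ≤ D x by linarith)]
      have h1 := hineq x hxT
      show f' x < 0
      simp only [hf']
      have h2 : y' x - y x * k x ≤ -(y x)^2 := by nlinarith
      have h3 : (0:ℝ) ≤ D x * Real.exp (-KG x) := mul_nonneg (by linarith) hex.le
      have h4 := mul_le_mul_of_nonneg_left h2 h3
      nlinarith [h4]
  have hft := key ⟨ht0, le_rfl⟩
  simp only [hf, hKG, hD] at hft
  linarith


lemma riccati_eps (T : ℝ) (hT : 0 ≤ T) (y y' k : ℝ → ℝ)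
    (hy0 : 0 < y 0)
    (hnonneg : ∀ s ∈ Set.Icc (0 : ℝ) T, 0 ≤ y s)
    (hknn : ∀ s ∈ Set.Icc (0 : ℝ) T, 0 ≤ k s)
    (hkint : MeasureTheory.IntegrableOn k (Set.Icc 0 T))
    (hderiv : ∀ s ∈ Set.Icc (0 : ℝ) T, HasDerivAt y (y' s) s)
    (hineq : ∀ s ∈ Set.Icc (0 : ℝ) T, y' s ≤ -(y s) ^ 2 + k s * y s)
    (t : ℝ) (ht : t ∈ Set.Icc (0:ℝ) T) (ε : ℝ) (hε : 0 < ε) :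
    y t * (1 + y 0 * ∫ s in (0:ℝ)..t, Real.exp (∫ r in (0:ℝ)..s, k r)) ≤
      (y 0 + ε) * Real.exp ((∫ s in (0:ℝ)..t, k s) + ε) := by
  have h0T : (0:ℝ) ∈ Icc (0:ℝ) T := ⟨le_rfl, hT⟩
  set μ : Measure ℝ := volume.restrict (Icc 0 T) with hμ
  haveI : (volume.restrict (Icc (0:ℝ) T)).WeaklyRegular :=
    Measure.WeaklyRegular.restrict_of_measure_ne_top (measure_Icc_lt_top).ne
  have hkmeas : AEMeasurable (fun x => Real.toNNReal (k x)) μ :=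
    measurable_real_toNNReal.comp_aemeasurable hkint.aemeasurable
  obtain ⟨g, hgk, hglsc, hgint⟩ :=
    exists_lt_lowerSemicontinuous_lintegral_ge_of_aemeasurable μ _ hkmeas
      (ε := ENNReal.ofReal ε) (ENNReal.ofReal_pos.2 hε).ne'
  have hktop : (∫⁻ x, (Real.toNNReal (k x) : ℝ≥0∞) ∂μ) ≠ ⊤ := by
    have h1 : ∀ x, (Real.toNNReal (k x) : ℝ≥0∞) ≤ ‖k x‖₊ := by
      intro x
      rw [← enorm_eq_nnnorm, ← ofReal_norm]
      exact ENNReal.coe_le_coe.2 (Real.toNNReal_mono (le_abs_self _))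
    exact ((lintegral_mono h1).trans_lt hkint.2).ne
  have hgtop : (∫⁻ x, g x ∂μ) ≠ ⊤ :=
    (hgint.trans_lt (ENNReal.add_lt_top.2 ⟨hktop.lt_top, ENNReal.ofReal_lt_top⟩)).ne
  have hgfin : ∀ᵐ x ∂μ, g x < ⊤ := ae_lt_top hglsc.measurable hgtop
  set G : ℝ → ℝ := fun x => (g x).toReal with hG
  have hGnn : ∀ x, 0 ≤ G x := fun x => ENNReal.toReal_nonneg
  have hGint : IntegrableOn G (Icc 0 T) :=
    integrable_toReal_of_lintegral_ne_top hglsc.measurable.aemeasurable hgtop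
  have hGii : ∀ u ∈ Icc (0:ℝ) T, ∀ v ∈ Icc (0:ℝ) T, IntervalIntegrable G volume u v :=
    fun u hu v hv => (hGint.mono_set (uIcc_subset_Icc hu hv)).intervalIntegrable
  have hkii : ∀ u ∈ Icc (0:ℝ) T, ∀ v ∈ Icc (0:ℝ) T, IntervalIntegrable k volume u v :=
    fun u hu v hv => (hkint.mono_set (uIcc_subset_Icc hu hv)).intervalIntegrable
  -- lsc slope property
  have hlow : ∀ x ∈ Ico (0:ℝ) t, ∀ᶠ z in 𝓝[>] x, k x * (z - x) ≤ ∫ r in x..z, G r := by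
    intro x hx
    have hxT : x ∈ Icc (0:ℝ) T := ⟨hx.1, hx.2.le.trans ht.2⟩
    have hev : ∀ᶠ w in 𝓝 x, (Real.toNNReal (k x) : ℝ≥0∞) < g w := hglsc x _ (hgk x)
    obtain ⟨δ, hδ, hball⟩ := Metric.eventually_nhds_iff.1 hev
    have hmem1 : Ioc x (min t (x + δ/2)) ∈ 𝓝[>] x :=
      Ioc_mem_nhdsGT_of_mem ⟨le_rfl, lt_min hx.2 (by linarith)⟩
    filter_upwards [hmem1] with z hz
    have hz1 : x < z := hz.1
    have hzt : z ≤ t := hz.2.trans (min_le_left _ _)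
    have hzδ : z ≤ x + δ/2 := hz.2.trans (min_le_right _ _)
    have hzT : z ∈ Icc (0:ℝ) T := ⟨hx.1.trans hz1.le, hzt.trans ht.2⟩
    have hsub : Icc x z ⊆ Icc (0:ℝ) T := fun w hw => ⟨hx.1.trans hw.1, hw.2.trans hzT.2⟩
    have hae : ∀ᵐ w ∂(volume.restrict (Icc x z)), k x ≤ G w := by
      have h2 := ae_restrict_of_ae_restrict_of_subset hsub hgfin
      filter_upwards [h2, ae_restrict_mem measurableSet_Icc] with w hw1 hw2
      have hdist : dist w x < δ := by
        rw [Real.dist_eq, abs_of_nonneg (by linarith [hw2.1] : (0:ℝ) ≤ w - x)]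
        have := hw2.2
        linarith
      have h3 := (hball hdist).le
      have h4 := ENNReal.toReal_mono hw1.ne h3
      simpa [hG, Real.coe_toNNReal _ (hknn x hxT)] using h4
    have h5 : (∫ _r in x..z, k x) ≤ ∫ r in x..z, G r :=
      intervalIntegral.integral_mono_ae_restrict hz1.le intervalIntegrable_const
        (hGii x hxT z hzT) hae
    have h6 : (∫ _r in x..z, k x) = (z - x) * k x := by
      simp [intervalIntegral.integral_const, smul_eq_mul]
    calc k x * (z - x) = (z - x) * k x := by ring
      _ = ∫ _r in x..z, k x := h6.symm
      _ ≤ _ := h5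
  have hfence := riccati_fence T t ε hT ht hε y y' k G hy0 hnonneg hderiv hineq hGint hGnn hlow
  have hGk_ae : ∀ᵐ w ∂μ, k w ≤ G w := by
    filter_upwards [hgfin, ae_restrict_mem measurableSet_Icc] with w hw1 hw2
    have h3 := (hgk w).le
    have h4 := ENNReal.toReal_mono hw1.ne h3
    simpa [hG, Real.coe_toNNReal _ (hknn w hw2)] using h4
  have hKle : ∀ s ∈ Icc (0:ℝ) t, (∫ r in (0:ℝ)..s, k r) ≤ ∫ r in (0:ℝ)..s, G r := by
    intro s hs
    have hsT : s ∈ Icc (0:ℝ) T := ⟨hs.1, hs.2.trans ht.2⟩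
    have hsub : Icc (0:ℝ) s ⊆ Icc (0:ℝ) T := Icc_subset_Icc le_rfl hsT.2
    exact intervalIntegral.integral_mono_ae_restrict hs.1 (hkii 0 h0T s hsT) (hGii 0 h0T s hsT)
      (ae_restrict_of_ae_restrict_of_subset hsub hGk_ae)
  have hKcont : ContinuousOn (fun s => ∫ r in (0:ℝ)..s, k r) (Icc 0 T) := by
    have h := intervalIntegral.continuousOn_primitive_interval
      (show IntegrableOn k (uIcc 0 T) volume by rwa [uIcc_of_le hT])
    rwa [uIcc_of_le hT] at h
  have hKGcont : ContinuousOn (fun s => ∫ r in (0:ℝ)..s, G r) (Icc 0 T) := by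
    have h := intervalIntegral.continuousOn_primitive_interval
      (show IntegrableOn G (uIcc 0 T) volume by rwa [uIcc_of_le hT])
    rwa [uIcc_of_le hT] at h
  have hsubt : Icc (0:ℝ) t ⊆ Icc 0 T := Icc_subset_Icc le_rfl ht.2
  have hIle : (∫ s in (0:ℝ)..t, Real.exp (∫ r in (0:ℝ)..s, k r)) ≤
      ∫ s in (0:ℝ)..t, Real.exp (∫ r in (0:ℝ)..s, G r) := by
    apply intervalIntegral.integral_mono_on ht.1
    · have h1 : IntegrableOn (fun s => Real.exp (∫ r in (0:ℝ)..s, k r)) (Icc 0 t) volume :=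
        (Real.continuous_exp.comp_continuousOn (hKcont.mono hsubt)).integrableOn_Icc
      have h2 : IntegrableOn (fun s => Real.exp (∫ r in (0:ℝ)..s, k r)) (uIcc 0 t) volume := by
        rwa [uIcc_of_le ht.1]
      exact h2.intervalIntegrable
    · have h1 : IntegrableOn (fun s => Real.exp (∫ r in (0:ℝ)..s, G r)) (Icc 0 t) volume :=
        (Real.continuous_exp.comp_continuousOn (hKGcont.mono hsubt)).integrableOn_Icc
      have h2 : IntegrableOn (fun s => Real.exp (∫ r in (0:ℝ)..s, G r)) (uIcc 0 t) volume := by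
        rwa [uIcc_of_le ht.1]
      exact h2.intervalIntegrable
    · intro s hs; exact Real.exp_le_exp.2 (hKle s hs)
  have hTicc : T ∈ Icc (0:ℝ) T := ⟨hT, le_rfl⟩
  have hGle : (∫ r in (0:ℝ)..t, G r) ≤ (∫ s in (0:ℝ)..t, k s) + ε := by
    have hdiff_nonneg : 0 ≤ ∫ r in t..T, (G r - k r) := by
      apply intervalIntegral.integral_nonneg_of_ae_restrict ht.2
      have hsub2 : Icc t T ⊆ Icc (0:ℝ) T := Icc_subset_Icc ht.1 le_rfl
      filter_upwards [ae_restrict_of_ae_restrict_of_subset hsub2 hGk_ae] with w hw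
      simp only [Pi.zero_apply]
      linarith
    have hsplitG := intervalIntegral.integral_add_adjacent_intervals
      (hGii 0 h0T t ht) (hGii t ht T hTicc)
    have hsplitk := intervalIntegral.integral_add_adjacent_intervals
      (hkii 0 h0T t ht) (hkii t ht T hTicc)
    have hsub3 : (∫ r in t..T, (G r - k r)) = (∫ r in t..T, G r) - ∫ r in t..T, k r :=
      intervalIntegral.integral_sub (hGii t ht T hTicc) (hkii t ht T hTicc)
    have hTbound : (∫ r in (0:ℝ)..T, G r) ≤ (∫ r in (0:ℝ)..T, k r) + ε := by
      have hA : (∫ r in (0:ℝ)..T, G r) = ∫ x in Icc (0:ℝ) T, G x := by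
        rw [intervalIntegral.integral_of_le hT, MeasureTheory.integral_Icc_eq_integral_Ioc]
      have hB : (∫ x in Icc (0:ℝ) T, G x) = (∫⁻ x, g x ∂μ).toReal :=
        integral_toReal hglsc.measurable.aemeasurable hgfin
      have hC : (∫⁻ x, g x ∂μ).toReal ≤
          (∫⁻ x, (Real.toNNReal (k x) : ℝ≥0∞) ∂μ).toReal + ε := by
        have h2 := ENNReal.toReal_mono
          ((ENNReal.add_lt_top.2 ⟨hktop.lt_top, ENNReal.ofReal_lt_top⟩).ne) hgint
        rwa [ENNReal.toReal_add hktop ENNReal.ofReal_ne_top, ENNReal.toReal_ofReal hε.le] at h2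
      have hD2 : (∫⁻ x, (Real.toNNReal (k x) : ℝ≥0∞) ∂μ).toReal = ∫ x in Icc (0:ℝ) T, k x := by
        rw [MeasureTheory.integral_eq_lintegral_of_nonneg_ae ?_ hkint.aestronglyMeasurable]
        · rfl
        · filter_upwards [ae_restrict_mem measurableSet_Icc] with w hw using hknn w hw
      have hE : (∫ x in Icc (0:ℝ) T, k x) = ∫ r in (0:ℝ)..T, k r := by
        rw [intervalIntegral.integral_of_le hT, MeasureTheory.integral_Icc_eq_integral_Ioc]
      linarith
    linarith
  have hytnn : 0 ≤ y t := hnonneg t ht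
  have hexp : (0:ℝ) < Real.exp (∫ r in (0:ℝ)..t, G r) := Real.exp_pos _
  have step1 : y t * (1 + y 0 * ∫ s in (0:ℝ)..t, Real.exp (∫ r in (0:ℝ)..s, k r)) ≤
      y t * (1 + y 0 * ∫ s in (0:ℝ)..t, Real.exp (∫ r in (0:ℝ)..s, G r)) := by
    apply mul_le_mul_of_nonneg_left _ hytnn
    have := mul_le_mul_of_nonneg_left hIle hy0.le
    linarith
  have hone : Real.exp (-(∫ r in (0:ℝ)..t, G r)) * Real.exp (∫ r in (0:ℝ)..t, G r) = 1 := by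
    rw [← Real.exp_add]; simp
  have step2 : y t * (1 + y 0 * ∫ s in (0:ℝ)..t, Real.exp (∫ r in (0:ℝ)..s, G r)) ≤
      (y 0 + ε) * Real.exp (∫ r in (0:ℝ)..t, G r) := by
    have h := mul_le_mul_of_nonneg_right hfence hexp.le
    calc y t * (1 + y 0 * ∫ s in (0:ℝ)..t, Real.exp (∫ r in (0:ℝ)..s, G r))
        = (y t * Real.exp (-(∫ r in (0:ℝ)..t, G r)) *
            (1 + y 0 * ∫ s in (0:ℝ)..t, Real.exp (∫ r in (0:ℝ)..s, G r))) *
          Real.exp (∫ r in (0:ℝ)..t, G r) := by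
          linear_combination (y t * (1 + y 0 * ∫ s in (0:ℝ)..t,
            Real.exp (∫ r in (0:ℝ)..s, G r))) * hone.symm
      _ ≤ (y 0 + ε) * Real.exp (∫ r in (0:ℝ)..t, G r) := h
  have step3 : (y 0 + ε) * Real.exp (∫ r in (0:ℝ)..t, G r) ≤
      (y 0 + ε) * Real.exp ((∫ s in (0:ℝ)..t, k s) + ε) :=
    mul_le_mul_of_nonneg_left (Real.exp_le_exp.2 hGle) (by linarith)
  linarith


/-- Riccati-type differential inequality bound via the substitution `v = 1/y`. -/
theorem riccati_inequality_bound (T : ℝ) (hT : 0 ≤ T) (y y' k : ℝ → ℝ)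
    (hy0 : 0 < y 0)
    (hnonneg : ∀ t ∈ Set.Icc (0 : ℝ) T, 0 ≤ y t)
    (hknn : ∀ t ∈ Set.Icc (0 : ℝ) T, 0 ≤ k t)
    (hkint : MeasureTheory.IntegrableOn k (Set.Icc 0 T))
    (hderiv : ∀ t ∈ Set.Icc (0 : ℝ) T, HasDerivAt y (y' t) t)
    (hineq : ∀ t ∈ Set.Icc (0 : ℝ) T, y' t ≤ -(y t) ^ 2 + k t * y t) :
    ∀ t ∈ Set.Icc (0 : ℝ) T,
      y t ≤ y 0 * Real.exp (∫ s in (0 : ℝ)..t, k s) /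
        (1 + y 0 * ∫ s in (0 : ℝ)..t, Real.exp (∫ r in (0 : ℝ)..s, k r)) := by
  intro t ht
  have hInn : 0 ≤ ∫ s in (0:ℝ)..t, Real.exp (∫ r in (0:ℝ)..s, k r) :=
    intervalIntegral.integral_nonneg ht.1 fun s _ => (Real.exp_pos _).le
  have hden : 0 < 1 + y 0 * ∫ s in (0:ℝ)..t, Real.exp (∫ r in (0:ℝ)..s, k r) := by
    have := mul_nonneg hy0.le hInn
    linarith
  rw [le_div_iff₀ hden]
  have htend : Tendsto (fun ε : ℝ => (y 0 + ε) * Real.exp ((∫ s in (0:ℝ)..t, k s) + ε))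
      (𝓝[>] (0:ℝ)) (𝓝 ((y 0 + 0) * Real.exp ((∫ s in (0:ℝ)..t, k s) + 0))) := by
    apply Tendsto.mono_left _ nhdsWithin_le_nhds
    exact Continuous.tendsto (by continuity) 0
  simp only [add_zero] at htend
  refine ge_of_tendsto htend ?_
  filter_upwards [self_mem_nhdsWithin] with ε hε
  exact riccati_eps T hT y y' k hy0 hnonneg hknn hkint hderiv hineq t ht ε hε
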